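/- With θ(x,q) = (x;q)_∞ (q/x;q)_∞ / (q;q)_∞^2, for every positive integer h, 0 < |q| < 1, and x ∈ C^× not an integral power of q, one has θ(x,q)/θ(x,q^h) = Π_{s=1}^{h−1} θ(q^s x, q^h)/θ(q^s, q^h). -/

import Mathlib

open scoped BigOperators

noncomputable def qPoch (x q : ℂ) : ℂ := ∏' n : ℕ, (1 - x * q ^ n)

noncomputable def theta (x q : ℂ) : ℂ := qPoch x q * qPoch (q / x) q / (qPoch q q) ^ 2

lemma summable_log {y q : ℂ} (hq : ‖q‖ < 1) (hy : ∀ n : ℕ, 1 - y * q ^ n ≠ 0) :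
    Summable (fun n : ℕ => Complex.log (1 - y * q ^ n)) := by
  apply Summable.of_norm_bounded_eventually_nat (g := fun n => 2 * (‖y‖ * ‖q‖ ^ n))
  · exact ((summable_geometric_of_lt_one (norm_nonneg q) hq).mul_left ‖y‖).mul_left 2
  · have htend : Filter.Tendsto (fun n : ℕ => ‖y‖ * ‖q‖ ^ n) Filter.atTop (nhds 0) := by
      simpa using (tendsto_pow_atTop_nhds_zero_of_norm_lt_one
        (by simpa using hq)).const_mul ‖y‖
    have hev : ∀ᶠ n : ℕ in Filter.atTop, ‖y‖ * ‖q‖ ^ n ≤ 1/2 :=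
      htend.eventually_le_const (by norm_num)
    filter_upwards [hev] with n hn
    have hz : ‖-(y * q ^ n)‖ ≤ 1/2 := by
      rw [norm_neg, norm_mul, norm_pow]; exact hn
    have hz1 : ‖-(y * q ^ n)‖ < 1 := lt_of_le_of_lt hz (by norm_num)
    have hb := Complex.norm_log_one_add_le hz1
    have harg : (1 : ℂ) + -(y * q ^ n) = 1 - y * q ^ n := by ring
    rw [harg] at hb
    set t := ‖-(y * q ^ n)‖ with ht
    have ht0 : 0 ≤ t := norm_nonneg _
    have hinv : (1 - t)⁻¹ ≤ 2 := by
      rw [inv_le_comm₀ (by linarith) (by norm_num)]; linarith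
    have : t ^ 2 * (1 - t)⁻¹ / 2 + t ≤ 2 * t := by nlinarith
    calc ‖Complex.log (1 - y * q ^ n)‖ ≤ t ^ 2 * (1 - t)⁻¹ / 2 + t := hb
      _ ≤ 2 * t := this
      _ = 2 * (‖y‖ * ‖q‖ ^ n) := by rw [ht, norm_neg, norm_mul, norm_pow]

lemma multipliable_qPoch {y q : ℂ} (hq : ‖q‖ < 1) (hy : ∀ n : ℕ, 1 - y * q ^ n ≠ 0) :
    Multipliable (fun n : ℕ => 1 - y * q ^ n) :=
  Complex.multipliable_of_summable_log (summable_log hq hy)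

lemma qPoch_ne_zero {y q : ℂ} (hq : ‖q‖ < 1) (hy : ∀ n : ℕ, 1 - y * q ^ n ≠ 0) :
    qPoch y q ≠ 0 := by
  have h2 := Complex.cexp_tsum_eq_tprod (f := fun n => 1 - y * q ^ n) hy (summable_log hq hy)
  rw [qPoch, ← h2]
  exact Complex.exp_ne_zero _

set_option maxHeartbeats 1000000 in
lemma qPoch_split {y q : ℂ} (hq : ‖q‖ < 1) (hy : ∀ n : ℕ, 1 - y * q ^ n ≠ 0)
    {h : ℕ} (hh : 0 < h) :
    qPoch y q = ∏ s ∈ Finset.range h, qPoch (q ^ s * y) (q ^ h) := by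
  haveI : NeZero h := ⟨hh.ne'⟩
  set f : ℕ → ℂ := fun n => 1 - y * q ^ n with hf
  have hm : Multipliable f := multipliable_qPoch hq hy
  set e : Fin h × ℕ ≃ ℕ :=
    (Equiv.prodComm (Fin h) ℕ).trans (Nat.divModEquiv h).symm with he
  have key : ∀ p : Fin h × ℕ,
      f (e p) = 1 - (q ^ (p.1 : ℕ) * y) * (q ^ h) ^ p.2 := by
    intro p
    have : e p = p.2 * h + (p.1 : ℕ) := rfl
    rw [this, hf]
    simp only []
    rw [pow_add, pow_mul]
    ring
  have hmG : Multipliable (fun p : Fin h × ℕ => 1 - (q ^ (p.1 : ℕ) * y) * (q ^ h) ^ p.2) := by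
    have := e.multipliable_iff.mpr hm
    exact this.congr key
  have step1 : qPoch y q = ∏' p : Fin h × ℕ, (1 - (q ^ (p.1 : ℕ) * y) * (q ^ h) ^ p.2) := by
    rw [qPoch, ← hf, ← e.tprod_eq f]
    exact tprod_congr key
  have hQ : ‖q ^ h‖ < 1 := by
    rw [norm_pow]; exact pow_lt_one₀ (norm_nonneg q) hq hh.ne'
  have hy' : ∀ (s : Fin h) (m : ℕ), 1 - (q ^ (s : ℕ) * y) * (q ^ h) ^ m ≠ 0 :=
    fun s m => (key (s, m)) ▸ hy _
  have h1 : ∀ b : Fin h, Multipliable fun c : ℕ => 1 - (q ^ (b : ℕ) * y) * (q ^ h) ^ c :=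
    fun b => multipliable_qPoch hQ (hy' b)
  have step2 := hmG.tprod_prod' h1
  refine step1.trans (step2.trans ?_)
  rw [tprod_fintype, ← Fin.prod_univ_eq_prod_range (fun s => qPoch (q ^ s * y) (q ^ h)) h]
  exact Finset.prod_congr rfl (fun b _ => rfl)

lemma prod_Ico_reflect_self (h : ℕ) (g : ℕ → ℂ) :
    ∏ s ∈ Finset.Ico 1 h, g (h - s) = ∏ s ∈ Finset.Ico 1 h, g s := by
  refine Finset.prod_nbij' (fun s => h - s) (fun s => h - s) ?_ ?_ ?_ ?_ ?_ <;>
    (intro a ha; simp only [Finset.mem_Ico] at *) <;> first | omega | (congr 1; omega)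


theorem theta_ratio (q x : ℂ) (h : ℕ) (hh : 0 < h)
    (hq0 : 0 < ‖q‖) (hq1 : ‖q‖ < 1) (hx : x ≠ 0)
    (hxq : ∀ n : ℤ, x ≠ q ^ n) :
    theta x q / theta x (q ^ h) =
      ∏ s ∈ Finset.Ico 1 h, theta (q ^ s * x) (q ^ h) / theta (q ^ s) (q ^ h) := by
  have hq1' : ‖q‖ < 1 := hq1
  have hq0' : q ≠ 0 := by
    intro h0; rw [h0] at hq0; simp at hq0
  have hQn : ‖q ^ h‖ < 1 := by
    rw [norm_pow]; exact pow_lt_one₀ (norm_nonneg q) hq1' hh.ne'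
  -- generic nonvanishing of factors
  have hfac1 : ∀ a n : ℕ, 1 - q ^ a * x * q ^ n ≠ 0 := by
    intro a n hcon
    rw [sub_eq_zero] at hcon
    apply hxq (-(a + n : ℕ) : ℤ)
    rw [zpow_neg, zpow_natCast]
    refine eq_inv_of_mul_eq_one_left ?_
    rw [pow_add]; linear_combination -hcon
  have hfac2 : ∀ a n : ℕ, 1 - q ^ a / x * q ^ n ≠ 0 := by
    intro a n hcon
    rw [sub_eq_zero] at hcon
    apply hxq ((a + n : ℕ) : ℤ)
    rw [zpow_natCast]
    field_simp at hcon
    rw [pow_add]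
    linear_combination hcon
  have hfac3 : ∀ a n : ℕ, a ≠ 0 → 1 - q ^ a * q ^ n ≠ 0 := by
    intro a n ha hcon
    rw [sub_eq_zero] at hcon
    have h2 : ‖q ^ a * q ^ n‖ < 1 := by
      rw [← pow_add, norm_pow]
      exact pow_lt_one₀ (norm_nonneg q) hq1' (by omega)
    rw [← hcon] at h2; simp at h2
  -- base q nonvanishing
  have hyx : ∀ n : ℕ, 1 - x * q ^ n ≠ 0 := fun n => by
    have := hfac1 0 n; rwa [pow_zero, one_mul] at this
  have hyqx : ∀ n : ℕ, 1 - q / x * q ^ n ≠ 0 := fun n => by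
    have := hfac2 1 n; rwa [pow_one] at this
  have hyq : ∀ n : ℕ, 1 - q * q ^ n ≠ 0 := fun n => by
    have := hfac3 1 n one_ne_zero; rwa [pow_one] at this
  -- base q^h nonvanishing
  have hQ1 : ∀ a m : ℕ, 1 - q ^ a * x * (q ^ h) ^ m ≠ 0 := fun a m => by
    rw [← pow_mul]; exact hfac1 a (h * m)
  have hQ2 : ∀ a m : ℕ, 1 - q ^ a / x * (q ^ h) ^ m ≠ 0 := fun a m => by
    rw [← pow_mul]; exact hfac2 a (h * m)
  have hQ3 : ∀ a m : ℕ, a ≠ 0 → 1 - q ^ a * (q ^ h) ^ m ≠ 0 := fun a m ha => by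
    rw [← pow_mul]; exact hfac3 a (h * m) ha
  have nB : ∀ a : ℕ, qPoch (q ^ a / x) (q ^ h) ≠ 0 := fun a => qPoch_ne_zero hQn (hQ2 a)
  have nC : ∀ a : ℕ, a ≠ 0 → qPoch (q ^ a) (q ^ h) ≠ 0 := fun a ha =>
    qPoch_ne_zero hQn (fun m => hQ3 a m ha)
  have nX : qPoch x (q ^ h) ≠ 0 := qPoch_ne_zero hQn (fun m => by
    have := hQ1 0 m; rwa [pow_zero, one_mul] at this)
  have nPC : (∏ s ∈ Finset.Ico 1 h, qPoch (q ^ s) (q ^ h)) ≠ 0 :=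
    Finset.prod_ne_zero_iff.mpr (fun s hs => nC s (by
      rw [Finset.mem_Ico] at hs; omega))
  -- splits
  have s1 : qPoch x q = ∏ s ∈ Finset.range h, qPoch (q ^ s * x) (q ^ h) :=
    qPoch_split hq1' hyx hh
  have s2 : qPoch (q / x) q = ∏ s ∈ Finset.range h, qPoch (q ^ (s + 1) / x) (q ^ h) := by
    rw [qPoch_split hq1' hyqx hh]
    exact Finset.prod_congr rfl fun s _ => by
      rw [show q ^ s * (q / x) = q ^ (s + 1) / x by rw [pow_succ]; ring]
  have s3 : qPoch q q = ∏ s ∈ Finset.range h, qPoch (q ^ (s + 1)) (q ^ h) := by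
    rw [qPoch_split hq1' hyq hh]
    exact Finset.prod_congr rfl fun s _ => by rw [pow_succ]
  -- peeling
  have p1 : ∏ s ∈ Finset.range h, qPoch (q ^ s * x) (q ^ h)
      = qPoch x (q ^ h) * ∏ s ∈ Finset.Ico 1 h, qPoch (q ^ s * x) (q ^ h) := by
    rw [Finset.range_eq_Ico, Finset.prod_eq_prod_Ico_succ_bot hh, pow_zero, one_mul]
  have p2 : ∏ s ∈ Finset.range h, qPoch (q ^ (s + 1) / x) (q ^ h)
      = (∏ s ∈ Finset.Ico 1 h, qPoch (q ^ s / x) (q ^ h)) * qPoch (q ^ h / x) (q ^ h) := by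
    calc ∏ s ∈ Finset.range h, qPoch (q ^ (s + 1) / x) (q ^ h)
        = ∏ s ∈ Finset.Ico 1 (h + 1), qPoch (q ^ s / x) (q ^ h) := by
          rw [Finset.prod_Ico_eq_prod_range]
          simp only [Nat.add_sub_cancel]
          exact Finset.prod_congr rfl fun s _ => by rw [Nat.add_comm]
      _ = _ := Finset.prod_Ico_succ_top hh _
  have p3 : ∏ s ∈ Finset.range h, qPoch (q ^ (s + 1)) (q ^ h)
      = (∏ s ∈ Finset.Ico 1 h, qPoch (q ^ s) (q ^ h)) * qPoch (q ^ h) (q ^ h) := by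
    calc ∏ s ∈ Finset.range h, qPoch (q ^ (s + 1)) (q ^ h)
        = ∏ s ∈ Finset.Ico 1 (h + 1), qPoch (q ^ s) (q ^ h) := by
          rw [Finset.prod_Ico_eq_prod_range]
          simp only [Nat.add_sub_cancel]
          exact Finset.prod_congr rfl fun s _ => by rw [Nat.add_comm]
      _ = _ := Finset.prod_Ico_succ_top hh _
  -- rhs per-term
  have term : ∀ s ∈ Finset.Ico 1 h,
      theta (q ^ s * x) (q ^ h) / theta (q ^ s) (q ^ h)
        = (qPoch (q ^ s * x) (q ^ h) * qPoch (q ^ (h - s) / x) (q ^ h)) /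
          (qPoch (q ^ s) (q ^ h) * qPoch (q ^ (h - s)) (q ^ h)) := by
    intro s hs
    rw [Finset.mem_Ico] at hs
    have hsle : s ≤ h := hs.2.le
    have e1 : q ^ h / (q ^ s * x) = q ^ (h - s) / x := by
      rw [pow_sub₀ q hq0' hsle]; ring
    have e2 : q ^ h / q ^ s = q ^ (h - s) := by
      rw [pow_sub₀ q hq0' hsle]; ring
    have n1 : qPoch (q ^ s) (q ^ h) ≠ 0 := nC s (by omega)
    have n2 : qPoch (q ^ (h - s)) (q ^ h) ≠ 0 := nC (h - s) (by omega)
    have nQQ : qPoch (q ^ h) (q ^ h) ≠ 0 := nC h hh.ne'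
    simp only [theta, e1, e2]
    field_simp
  have rhs : ∏ s ∈ Finset.Ico 1 h, theta (q ^ s * x) (q ^ h) / theta (q ^ s) (q ^ h)
      = ((∏ s ∈ Finset.Ico 1 h, qPoch (q ^ s * x) (q ^ h)) *
          ∏ s ∈ Finset.Ico 1 h, qPoch (q ^ s / x) (q ^ h)) /
        ((∏ s ∈ Finset.Ico 1 h, qPoch (q ^ s) (q ^ h)) *
          ∏ s ∈ Finset.Ico 1 h, qPoch (q ^ s) (q ^ h)) := by
    rw [Finset.prod_congr rfl term, Finset.prod_div_distrib, Finset.prod_mul_distrib,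
      Finset.prod_mul_distrib,
      prod_Ico_reflect_self h (fun t => qPoch (q ^ t / x) (q ^ h)),
      prod_Ico_reflect_self h (fun t => qPoch (q ^ t) (q ^ h))]
  rw [rhs]
  show theta x q / theta x (q ^ h) = _
  rw [theta, theta, s1, s2, s3, p1, p2, p3]
  have nBh : qPoch (q ^ h / x) (q ^ h) ≠ 0 := nB h
  have nCh : qPoch (q ^ h) (q ^ h) ≠ 0 := nC h hh.ne'
  field_simp
  ring
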